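/- Let (ε_t)_{t≥1} be random variables and (ψ_t)_{t≥1} be a predictable sequence with ψ_t ∈ (0,1], and (A_t) arm indicators with P(A_t = k | F_{t-1}) = ψ_t where ε_t is independent of F_{t-1} and of A_t given F_{t-1}, with E[ε_t] = 0 and Var(ε_t) = 1. Then the adaptively weighted sum M_t = Σ_{s≤t} ψ_s^{-1/2} 1{A_s = k} ε_s is a martingale with respect to (F_t) and E[M_T²] = T for every T; in particular Var(T^{-1/2} M_T) = 1. -/

import Mathlib

open MeasureTheory Finset

/-- The adaptively weighted sum `M_t = Σ_{s≤t} ψ_s^{-1/2} 1{A_s = k} ε_s`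
is a martingale with `E[M_T²] = T`; in particular `Var(T^{-1/2} M_T) = 1`.
The indicator `1{A_s = k}` is the 0/1-valued process `χ`, `ψ` is the predictable
sampling probability, and the conditional-moment hypotheses encode
`P(A_t = k | F_{t-1}) = ψ_t`, `E[ε_t] = 0`, `Var(ε_t) = 1` and the independence of
`ε_t` from the past and from `A_t`. -/
theorem stmt7 {Ω : Type*} {m0 : MeasurableSpace Ω} (μ : Measure Ω) [IsProbabilityMeasure μ]
    (ℱ : Filtration ℕ m0) (ψ χ ε : ℕ → Ω → ℝ)
    (hψ_pred : ∀ t, StronglyMeasurable[ℱ t] (ψ (t + 1)))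
    (hψ_range : ∀ t ω, ψ t ω ∈ Set.Ioc (0 : ℝ) 1)
    (hχ : ∀ t ω, χ t ω = 0 ∨ χ t ω = 1)
    (hadapt : ∀ t, StronglyMeasurable[ℱ (t + 1)]
      (fun ω => (Real.sqrt (ψ (t + 1) ω))⁻¹ * χ (t + 1) ω * ε (t + 1) ω))
    (hInt : ∀ t, Integrable
      (fun ω => (Real.sqrt (ψ (t + 1) ω))⁻¹ * χ (t + 1) ω * ε (t + 1) ω) μ)
    (hInt2 : ∀ t, Integrable
      (fun ω => (ψ (t + 1) ω)⁻¹ * χ (t + 1) ω * (ε (t + 1) ω) ^ 2) μ)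
    (hprob : ∀ t, μ[χ (t + 1) | ℱ t] =ᵐ[μ] fun ω => ψ (t + 1) ω)
    (hmean : ∀ t, μ[fun ω => χ (t + 1) ω * ε (t + 1) ω | ℱ t] =ᵐ[μ] fun _ => 0)
    (hvar : ∀ t, μ[fun ω => χ (t + 1) ω * (ε (t + 1) ω) ^ 2 | ℱ t]
      =ᵐ[μ] fun ω => ψ (t + 1) ω) :
    Martingale (fun t ω => ∑ s ∈ range t,
        (Real.sqrt (ψ (s + 1) ω))⁻¹ * χ (s + 1) ω * ε (s + 1) ω) ℱ μ ∧
    (∀ T : ℕ, ∫ ω, (∑ s ∈ range T,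
        (Real.sqrt (ψ (s + 1) ω))⁻¹ * χ (s + 1) ω * ε (s + 1) ω) ^ 2 ∂μ = T) ∧
    (∀ T : ℕ, 1 ≤ T → ∫ ω, ((Real.sqrt T)⁻¹ * ∑ s ∈ range T,
        (Real.sqrt (ψ (s + 1) ω))⁻¹ * χ (s + 1) ω * ε (s + 1) ω) ^ 2 ∂μ = 1) := by
  -- abbreviations
  set X : ℕ → Ω → ℝ := fun t ω => (Real.sqrt (ψ (t + 1) ω))⁻¹ * χ (t + 1) ω * ε (t + 1) ω
    with hX
  have hψ_pos : ∀ t ω, 0 < ψ t ω := fun t ω => (hψ_range t ω).1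
  have hψ_le : ∀ t ω, ψ t ω ≤ 1 := fun t ω => (hψ_range t ω).2
  have hsqrt_pos : ∀ t ω, 0 < Real.sqrt (ψ t ω) := fun t ω =>
    Real.sqrt_pos.2 (hψ_pos t ω)
  -- X squared
  have hXsq : ∀ t ω, (X t ω) ^ 2 = (ψ (t + 1) ω)⁻¹ * χ (t + 1) ω * (ε (t + 1) ω) ^ 2 := by
    intro t ω
    rcases hχ (t + 1) ω with h | h
    · simp [hX, h]
    · have hs : (Real.sqrt (ψ (t + 1) ω))⁻¹ ^ 2 = (ψ (t + 1) ω)⁻¹ := by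
        rw [inv_pow, Real.sq_sqrt (hψ_pos (t + 1) ω).le]
      simp only [hX, h, mul_one]
      rw [mul_pow, hs]
  -- X t is strongly measurable wrt m0
  have hXm : ∀ t, AEStronglyMeasurable (X t) μ := fun t =>
    ((hadapt t).mono (ℱ.le _)).aestronglyMeasurable
  -- X t is in L2
  have hXL2 : ∀ t, MemLp (X t) 2 μ := by
    intro t
    refine (memLp_two_iff_integrable_sq (hXm t)).2 ?_
    refine (hInt2 t).congr ?_
    exact Filter.Eventually.of_forall fun ω => (hXsq t ω).symm
  have hXsqInt : ∀ t, Integrable (fun ω => (X t ω) ^ 2) μ := by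
    intro t
    refine (hInt2 t).congr (Filter.Eventually.of_forall fun ω => (hXsq t ω).symm)
  -- measurability of (sqrt ψ)⁻¹ wrt ℱ t
  have hsm : ∀ t, StronglyMeasurable[ℱ t] (fun ω => (Real.sqrt (ψ (t + 1) ω))⁻¹) :=
    fun t => ((hψ_pred t).measurable.sqrt.inv).stronglyMeasurable
  have hsm2 : ∀ t, StronglyMeasurable[ℱ t] (fun ω => (ψ (t + 1) ω)⁻¹) :=
    fun t => ((hψ_pred t).measurable.inv).stronglyMeasurable
  -- integrability of χ * ε
  have hIntχε : ∀ t, Integrable (fun ω => χ (t + 1) ω * ε (t + 1) ω) μ := by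
    intro t
    have : ∀ ω, χ (t + 1) ω * ε (t + 1) ω = Real.sqrt (ψ (t + 1) ω) * X t ω := by
      intro ω
      simp only [hX]
      rw [show Real.sqrt (ψ (t + 1) ω) * ((Real.sqrt (ψ (t + 1) ω))⁻¹ * χ (t + 1) ω * ε (t + 1) ω)
          = (Real.sqrt (ψ (t + 1) ω) * (Real.sqrt (ψ (t + 1) ω))⁻¹) * (χ (t + 1) ω * ε (t + 1) ω)
          from by ring, mul_inv_cancel₀ (hsqrt_pos (t + 1) ω).ne', one_mul]
    refine Integrable.congr ?_ (Filter.Eventually.of_forall fun ω => (this ω).symm)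
    refine (hInt t).bdd_mul (c := 1) ?_ (Filter.Eventually.of_forall fun ω => ?_)
    · exact (Measurable.sqrt ((hψ_pred t).measurable.mono (ℱ.le _) le_rfl)).aestronglyMeasurable
    · rw [Real.norm_eq_abs, abs_of_nonneg (Real.sqrt_nonneg _)]
      exact Real.sqrt_le_one.2 (hψ_le (t + 1) ω)
  -- integrability of χ * ε²
  have hIntχε2 : ∀ t, Integrable (fun ω => χ (t + 1) ω * (ε (t + 1) ω) ^ 2) μ := by
    intro t
    have : ∀ ω, χ (t + 1) ω * (ε (t + 1) ω) ^ 2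
        = ψ (t + 1) ω * ((ψ (t + 1) ω)⁻¹ * χ (t + 1) ω * (ε (t + 1) ω) ^ 2) := by
      intro ω
      rw [show ψ (t + 1) ω * ((ψ (t + 1) ω)⁻¹ * χ (t + 1) ω * (ε (t + 1) ω) ^ 2)
          = (ψ (t + 1) ω * (ψ (t + 1) ω)⁻¹) * (χ (t + 1) ω * (ε (t + 1) ω) ^ 2)
          from by ring, mul_inv_cancel₀ (hψ_pos (t + 1) ω).ne', one_mul]
    refine Integrable.congr ?_ (Filter.Eventually.of_forall fun ω => (this ω).symm)
    refine (hInt2 t).bdd_mul (c := 1) ?_ (Filter.Eventually.of_forall fun ω => ?_)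
    · exact ((hψ_pred t).mono (ℱ.le _)).aestronglyMeasurable
    · rw [Real.norm_eq_abs, abs_of_nonneg (hψ_pos (t + 1) ω).le]
      exact hψ_le (t + 1) ω
  -- conditional expectation of X t is 0
  have hX0 : ∀ t, μ[X t | ℱ t] =ᵐ[μ] fun _ => 0 := by
    intro t
    have heq : X t = (fun ω => (Real.sqrt (ψ (t + 1) ω))⁻¹)
        * (fun ω => χ (t + 1) ω * ε (t + 1) ω) := by
      funext ω; simp [hX, mul_assoc]
    have h1 : Integrable ((fun ω => (Real.sqrt (ψ (t + 1) ω))⁻¹)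
        * fun ω => χ (t + 1) ω * ε (t + 1) ω) μ := heq ▸ hInt t
    have := condExp_mul_of_stronglyMeasurable_left (hsm t) h1 (hIntχε t)
    rw [heq]
    refine this.trans ?_
    filter_upwards [hmean t] with ω hω
    simp only [Pi.mul_apply, hω, mul_zero]
  -- conditional expectation of X t ^ 2 is 1
  have hX1 : ∀ t, μ[fun ω => (X t ω) ^ 2 | ℱ t] =ᵐ[μ] fun _ => 1 := by
    intro t
    have heq : (fun ω => (X t ω) ^ 2) = (fun ω => (ψ (t + 1) ω)⁻¹)
        * (fun ω => χ (t + 1) ω * (ε (t + 1) ω) ^ 2) := by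
      funext ω; simp only [Pi.mul_apply, hXsq t ω, mul_assoc]
    have h1 : Integrable ((fun ω => (ψ (t + 1) ω)⁻¹)
        * fun ω => χ (t + 1) ω * (ε (t + 1) ω) ^ 2) μ := by
      refine (hInt2 t).congr (Filter.Eventually.of_forall fun ω => ?_)
      simp [mul_assoc]
    have := condExp_mul_of_stronglyMeasurable_left (hsm2 t) h1 (hIntχε2 t)
    rw [heq]
    refine this.trans ?_
    filter_upwards [hvar t] with ω hω
    simp only [Pi.mul_apply, hω]
    exact inv_mul_cancel₀ (hψ_pos (t + 1) ω).ne'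
  -- the partial sums
  set M : ℕ → Ω → ℝ := fun t ω => ∑ s ∈ range t, X s ω with hM
  have hMadapt : ∀ t, StronglyMeasurable[ℱ t] (M t) := by
    intro t
    refine Finset.stronglyMeasurable_fun_sum (range t) fun s hs => ?_
    exact (hadapt s).mono (ℱ.mono (mem_range.1 hs))
  have hML2 : ∀ t, MemLp (M t) 2 μ := by
    intro t
    have he : M t = ∑ i ∈ range t, X i := by
      funext ω; simp [hM]
    rw [he]
    exact memLp_finsetSum' (range t) fun s _ => hXL2 s
  have hMInt : ∀ t, Integrable (M t) μ := fun t =>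
    integrable_finset_sum (range t) fun s _ => hInt s
  have hMsucc : ∀ t ω, M (t + 1) ω = M t ω + X t ω := by
    intro t ω; simp [hM, sum_range_succ]
  -- martingale
  have hmart : Martingale M ℱ μ := by
    refine martingale_nat hMadapt hMInt fun n => ?_
    have hadd : μ[M (n + 1) | ℱ n] =ᵐ[μ] μ[M n | ℱ n] + μ[X n | ℱ n] := by
      have : M (n + 1) = M n + X n := by funext ω; exact hMsucc n ω
      rw [this]
      exact condExp_add (hMInt n) (hInt n) _
    have hMn : μ[M n | ℱ n] = M n :=
      condExp_of_stronglyMeasurable (ℱ.le n) (hMadapt n) (hMInt n)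
    refine (hadd.trans ?_).symm
    filter_upwards [hX0 n] with ω h2
    simp [hMn, h2]
  -- integrability of M X, M², cross term expectation 0
  have hMXInt : ∀ t, Integrable (fun ω => M t ω * X t ω) μ := by
    intro t
    have := MemLp.smul (p := 2) (q := 2) (r := 1) (hXL2 t) (hML2 t)
      (hpqr := ⟨by norm_num [ENNReal.inv_two_add_inv_two]⟩)
    rw [memLp_one_iff_integrable] at this
    exact this
  have hMsqInt : ∀ t, Integrable (fun ω => (M t ω) ^ 2) μ := by
    intro t
    exact (memLp_two_iff_integrable_sq (hML2 t).aestronglyMeasurable).1 (hML2 t)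
  have hcross : ∀ t, ∫ ω, M t ω * X t ω ∂μ = 0 := by
    intro t
    have hce : μ[fun ω => M t ω * X t ω | ℱ t] =ᵐ[μ] fun _ => 0 := by
      have heq : (fun ω => M t ω * X t ω) = M t * X t := rfl
      rw [heq]
      refine (condExp_mul_of_stronglyMeasurable_left (hMadapt t) (hMXInt t) (hInt t)).trans ?_
      filter_upwards [hX0 t] with ω hω
      simp [hω]
    calc ∫ ω, M t ω * X t ω ∂μ
        = ∫ ω, (μ[fun ω => M t ω * X t ω | ℱ t]) ω ∂μ := (integral_condExp (ℱ.le t)).symm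
      _ = ∫ ω, (0 : ℝ) ∂μ := integral_congr_ae hce
      _ = 0 := by simp
  have hXsqint : ∀ t, ∫ ω, (X t ω) ^ 2 ∂μ = 1 := by
    intro t
    calc ∫ ω, (X t ω) ^ 2 ∂μ
        = ∫ ω, (μ[fun ω => (X t ω) ^ 2 | ℱ t]) ω ∂μ := (integral_condExp (ℱ.le t)).symm
      _ = ∫ ω, (1 : ℝ) ∂μ := integral_congr_ae (hX1 t)
      _ = 1 := by simp
  -- second moment
  have hsecond : ∀ T : ℕ, ∫ ω, (M T ω) ^ 2 ∂μ = T := by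
    intro T
    induction T with
    | zero => simp [hM]
    | succ n ih =>
      have hexp : ∀ ω, (M (n + 1) ω) ^ 2
          = (M n ω) ^ 2 + (2 * (M n ω * X n ω) + (X n ω) ^ 2) := by
        intro ω; rw [hMsucc n ω]; ring
      have hC : Integrable (fun ω => 2 * (M n ω * X n ω)) μ := (hMXInt n).const_mul 2
      have hB : Integrable (fun ω => 2 * (M n ω * X n ω) + X n ω ^ 2) μ := hC.add (hXsqInt n)
      rw [integral_congr_ae (Filter.Eventually.of_forall hexp)]
      rw [integral_add (hMsqInt n) hB, integral_add hC (hXsqInt n),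
        integral_const_mul, hcross n, hXsqint n, ih]
      push_cast
      ring
  refine ⟨hmart, hsecond, fun T hT => ?_⟩
  have hTpos : (0 : ℝ) < T := by exact_mod_cast hT
  have : ∀ ω, ((Real.sqrt T)⁻¹ * M T ω) ^ 2 = (T : ℝ)⁻¹ * (M T ω) ^ 2 := by
    intro ω
    rw [mul_pow, inv_pow, Real.sq_sqrt hTpos.le]
  rw [integral_congr_ae (Filter.Eventually.of_forall this), integral_const_mul, hsecond T,
    inv_mul_cancel₀ hTpos.ne']
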